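/- For every fixed θ > 0 and every a > 0, sup_{u ≥ a} [ψ′(θ) + (ψ(θ) − ψ(u))²] / (ψ′(u)² (1 + (u − θ)²)) = +∞. (Hence, without an upper truncation bound, the Gamma recursive estimation procedure fails the growth condition (2) of the convergence corollary.) -/

import Mathlib

open Set Filter Real

/-- The digamma function `ψ(x) = (d/dx) log Γ(x)`. -/
noncomputable def digamma (x : ℝ) : ℝ := deriv (fun y => Real.log (Real.Gamma y)) x

/-- The trigamma function `ψ′(x) = (d²/dx²) log Γ(x)`. -/
noncomputable def trigamma (x : ℝ) : ℝ := deriv digamma x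

lemma analyticOnNhd_logGamma :
    AnalyticOnNhd ℝ (fun y : ℝ => Real.log (Real.Gamma y)) (Set.Ioi 0) := by
  intro x hx
  have hx0 : (0 : ℝ) < x := hx
  have hGpos := Real.Gamma_pos_of_pos hx0
  have hGx : Complex.Gamma (x : ℂ) = (Real.Gamma x : ℂ) := Complex.Gamma_ofReal x
  have h1 : AnalyticAt ℂ (fun s => (Complex.Gamma s)⁻¹) (x : ℂ) :=
    Complex.differentiable_one_div_Gamma.analyticAt _
  have h2 : (fun s => (Complex.Gamma s)⁻¹) (x : ℂ) ≠ 0 := by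
    simp only [hGx]
    exact inv_ne_zero (by exact_mod_cast hGpos.ne')
  have hG : AnalyticAt ℂ Complex.Gamma (x : ℂ) := by
    have := h1.inv h2
    simpa [inv_inv, Pi.inv_def] using this
  have hm : Complex.Gamma (x : ℂ) ∈ Complex.slitPlane := by
    rw [hGx]; exact Complex.ofReal_mem_slitPlane.2 hGpos
  have hlog : AnalyticAt ℂ (fun z => Complex.log (Complex.Gamma z)) (x : ℂ) :=
    (_root_.analyticAt_clog hm).comp hG
  have hR : AnalyticAt ℝ (fun y : ℝ => Complex.log (Complex.Gamma ((y : ℝ) : ℂ))) x := by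
    have := (hlog.restrictScalars (𝕜 := ℝ)).comp (Complex.ofRealCLM.analyticAt x)
    exact this
  have hRe : AnalyticAt ℝ (fun y : ℝ => (Complex.log (Complex.Gamma ((y : ℝ) : ℂ))).re) x := by
    have h5 : AnalyticAt ℝ ((⇑Complex.reCLM) ∘ fun y : ℝ =>
        Complex.log (Complex.Gamma ((y : ℝ) : ℂ))) x :=
      (Complex.reCLM.analyticAt _).comp hR
    exact h5
  apply hRe.congr
  filter_upwards [eventually_gt_nhds hx0] with y hy
  rw [Complex.Gamma_ofReal, ← Complex.ofReal_log (Real.Gamma_pos_of_pos hy).le,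
    Complex.ofReal_re]

lemma analyticOnNhd_digamma : AnalyticOnNhd ℝ digamma (Set.Ioi 0) :=
  analyticOnNhd_logGamma.deriv_of_isOpen isOpen_Ioi

lemma dlgamma_diff {x : ℝ} (hx : 0 < x) :
    DifferentiableAt ℝ (fun y : ℝ => Real.log (Real.Gamma y)) x :=
  (analyticOnNhd_logGamma x hx).differentiableAt

lemma logGamma_rec {x : ℝ} (hx : 0 < x) :
    Real.log (Real.Gamma (x + 1)) = Real.log (Real.Gamma x) + Real.log x := by
  rw [Real.Gamma_add_one hx.ne', Real.log_mul hx.ne' (Real.Gamma_pos_of_pos hx).ne', add_comm]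

lemma digamma_rec {x : ℝ} (hx : 0 < x) : digamma (x + 1) = digamma x + 1 / x := by
  unfold digamma
  rw [← deriv_comp_add_const, one_div, ← Real.deriv_log,
    ← deriv_add (dlgamma_diff hx) (Real.differentiableAt_log hx.ne')]
  apply Filter.EventuallyEq.deriv_eq
  filter_upwards [eventually_gt_nhds hx] with y hy
  exact logGamma_rec hy

lemma digamma_le {u : ℝ} (hu : 0 < u) : digamma u ≤ Real.log u := by
  have hc := Real.convexOn_log_Gamma
  have h := hc.deriv_le_slope (Set.mem_Ioi.2 hu)
    (Set.mem_Ioi.2 (by linarith : (0 : ℝ) < u + 1)) (by linarith) (dlgamma_diff hu)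
  rw [slope_def_field] at h
  have h1 : u + 1 - u = (1 : ℝ) := by ring
  rw [h1, div_one] at h
  calc digamma u = deriv (Real.log ∘ Real.Gamma) u := rfl
    _ ≤ (Real.log ∘ Real.Gamma) (u + 1) - (Real.log ∘ Real.Gamma) u := h
    _ = Real.log u := by
        simp only [Function.comp_apply, logGamma_rec hu]; ring

lemma le_digamma {u : ℝ} (hu : 1 < u) : Real.log (u - 1) ≤ digamma u := by
  have hu1 : (0 : ℝ) < u - 1 := by linarith
  have hc := Real.convexOn_log_Gamma
  have h := hc.slope_le_deriv (Set.mem_Ioi.2 hu1)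
    (Set.mem_Ioi.2 (by linarith : (0 : ℝ) < u)) (by linarith) (dlgamma_diff (by linarith))
  rw [slope_def_field] at h
  have h1 : u - (u - 1) = (1 : ℝ) := by ring
  rw [h1, div_one] at h
  calc Real.log (u - 1)
      = (Real.log ∘ Real.Gamma) u - (Real.log ∘ Real.Gamma) (u - 1) := by
        have := logGamma_rec hu1
        rw [show u - 1 + 1 = u by ring] at this
        simp only [Function.comp_apply, this]; ring
    _ ≤ deriv (Real.log ∘ Real.Gamma) u := h
    _ = digamma u := rfl

lemma exists_trigamma_eq {n : ℕ} (hn : 2 ≤ n) :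
    ∃ c ∈ Set.Ioo (n : ℝ) ((n : ℝ) + 1), trigamma c = 1 / (n : ℝ) := by
  have h0 : (0 : ℝ) < (n : ℝ) := by exact_mod_cast Nat.lt_of_lt_of_le Nat.zero_lt_two hn
  have hsub : Set.Icc (n : ℝ) ((n : ℝ) + 1) ⊆ Set.Ioi 0 := fun x hx => lt_of_lt_of_le h0 hx.1
  have hsub' : Set.Ioo (n : ℝ) ((n : ℝ) + 1) ⊆ Set.Ioi 0 := fun x hx => lt_trans h0 hx.1
  have hcont : ContinuousOn digamma (Set.Icc (n : ℝ) ((n : ℝ) + 1)) :=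
    (analyticOnNhd_digamma.continuousOn).mono hsub
  have hdiff : DifferentiableOn ℝ digamma (Set.Ioo (n : ℝ) ((n : ℝ) + 1)) :=
    (analyticOnNhd_digamma.differentiableOn).mono hsub'
  obtain ⟨c, hc, hderiv⟩ :=
    exists_deriv_eq_slope digamma (by linarith : (n : ℝ) < (n : ℝ) + 1) hcont hdiff
  refine ⟨c, hc, ?_⟩
  show deriv digamma c = 1 / (n : ℝ)
  rw [hderiv, digamma_rec h0]
  have h1 : (n : ℝ) + 1 - (n : ℝ) = 1 := by ring
  rw [h1, div_one]
  ring

set_option maxHeartbeats 1000000 in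
/-- For every fixed `θ > 0` and every `a > 0`,
`sup_{u ≥ a} [ψ′(θ) + (ψ(θ) − ψ(u))²] / (ψ′(u)² (1 + (u − θ)²)) = +∞`,
i.e. the quantity is unbounded above over `{u : u ≥ a}`. -/
theorem stmt_16 (θ : ℝ) (hθ : 0 < θ) (a : ℝ) (ha : 0 < a) :
    ∀ M : ℝ, ∃ u : ℝ, a ≤ u ∧
      M < (trigamma θ + (digamma θ - digamma u) ^ 2) /
            ((trigamma u) ^ 2 * (1 + (u - θ) ^ 2)) := by
  intro M
  obtain ⟨t, ht⟩ : ∃ t, trigamma θ = t := ⟨_, rfl⟩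
  obtain ⟨K, hK0, hKsq⟩ : ∃ K : ℝ, 0 ≤ K ∧ K ^ 2 = 5 * max M 0 + 5 * |t| + 5 :=
    ⟨Real.sqrt (5 * max M 0 + 5 * |t| + 5), Real.sqrt_nonneg _, Real.sq_sqrt (by positivity)⟩
  obtain ⟨n, hn⟩ := exists_nat_ge (max (max a (θ + 1)) (Real.exp (digamma θ + K) + 2))
  have hna : a ≤ (n : ℝ) := le_trans (le_trans (le_max_left _ _) (le_max_left _ _)) hn
  have hnθ : θ + 1 ≤ (n : ℝ) := le_trans (le_trans (le_max_right _ _) (le_max_left _ _)) hn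
  have hnexp : Real.exp (digamma θ + K) + 2 ≤ (n : ℝ) := le_trans (le_max_right _ _) hn
  have hexp_pos := Real.exp_pos (digamma θ + K)
  have hn2 : 2 ≤ n := by
    have : (2 : ℝ) ≤ (n : ℝ) := by linarith
    exact_mod_cast this
  have hnR : (2 : ℝ) ≤ (n : ℝ) := by exact_mod_cast hn2
  obtain ⟨c, hc, htri⟩ := exists_trigamma_eq hn2
  obtain ⟨hc1, hc2⟩ := hc
  have hcpos : (1 : ℝ) < c := by linarith
  refine ⟨c, by linarith, ?_⟩
  rw [ht, htri]
  -- digamma lower bound at c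
  have hd1 : Real.log ((n : ℝ) - 1) ≤ Real.log (c - 1) :=
    Real.log_le_log (by linarith) (by linarith)
  have hd2 : Real.log (c - 1) ≤ digamma c := le_digamma hcpos
  have hd3 : digamma θ + K ≤ Real.log ((n : ℝ) - 1) := by
    have h1 : Real.exp (digamma θ + K) ≤ (n : ℝ) - 1 := by linarith
    calc digamma θ + K = Real.log (Real.exp (digamma θ + K)) := (Real.log_exp _).symm
      _ ≤ Real.log ((n : ℝ) - 1) := Real.log_le_log hexp_pos h1
  have hdc : digamma θ + K ≤ digamma c := by linarith
  -- numerator bound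
  have hnum : 5 * max M 0 + 5 ≤ t + (digamma θ - digamma c) ^ 2 := by
    have hsq : K ^ 2 ≤ (digamma θ - digamma c) ^ 2 := by
      have h1 : K ≤ digamma c - digamma θ := by linarith
      have h2 : K ^ 2 ≤ (digamma c - digamma θ) ^ 2 := by nlinarith
      have h3 : (digamma c - digamma θ) ^ 2 = (digamma θ - digamma c) ^ 2 := by ring
      linarith
    have habs : -|t| ≤ t := neg_abs_le t
    linarith [abs_nonneg t]
  -- denominator bound
  have hnpos : (0 : ℝ) < (n : ℝ) := by linarith
  have hden_pos : 0 < (1 / (n : ℝ)) ^ 2 * (1 + (c - θ) ^ 2) := by positivity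
  have hden_le : (1 / (n : ℝ)) ^ 2 * (1 + (c - θ) ^ 2) ≤ 5 := by
    have h1 : 0 ≤ c - θ := by linarith
    have h2 : c - θ ≤ (n : ℝ) + 1 := by linarith
    have h3 : (c - θ) ^ 2 ≤ ((n : ℝ) + 1) ^ 2 := by nlinarith [h1, h2]
    have h4 : 1 + ((n : ℝ) + 1) ^ 2 ≤ 5 * (n : ℝ) ^ 2 := by nlinarith [hnR]
    rw [div_pow, one_pow]
    rw [div_mul_eq_mul_div, one_mul, div_le_iff₀ (by positivity)]
    nlinarith
  -- conclude
  have hNpos : (0 : ℝ) ≤ t + (digamma θ - digamma c) ^ 2 := by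
    have : (0 : ℝ) ≤ 5 * max M 0 + 5 := by positivity
    linarith
  have hstep : (t + (digamma θ - digamma c) ^ 2) / 5 ≤
      (t + (digamma θ - digamma c) ^ 2) / ((1 / (n : ℝ)) ^ 2 * (1 + (c - θ) ^ 2)) :=
    div_le_div_of_nonneg_left hNpos hden_pos hden_le
  have hM5 : M < (t + (digamma θ - digamma c) ^ 2) / 5 := by
    rw [lt_div_iff₀ (by norm_num : (0 : ℝ) < 5)]
    have : 5 * M ≤ 5 * max M 0 := by nlinarith [le_max_left M 0]
    linarith
  linarith
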